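/- Let k be an algebraically closed field whose cardinality is strictly greater than ℵ₀, let ι be a countably infinite type, and let R = MvPolynomial ι k with its standard grading by total degree. For a nonzero function c : ι → k, let 𝔭_c ⊆ R be the ideal generated by the elements c(j)·X_i − c(i)·X_j for all i, j ∈ ι (equivalently, the set of polynomials all of whose homogeneous components vanish at c). Then each 𝔭_c is a homogeneous prime ideal not containing the irrelevant ideal, the corresponding point of the projective spectrum Proj(R) is a closed point, 𝔭_c = 𝔭_{c'} if and only if c' = λ·c for some λ ∈ k^*, and every closed point of Proj(R) is of the form 𝔭_c for some nonzero c : ι → k. Thus the closed points of Proj(R) are in one-to-one correspondence with nonzero functions ι → k modulo scalar multiplication. -/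

import Mathlib

set_option maxHeartbeats 2000000
set_option synthInstance.maxHeartbeats 400000

noncomputable section

open MvPolynomial

attribute [local instance] MvPolynomial.gradedAlgebra

/-- The ideal `𝔭_c` attached to a function `c : ι → k`: the ideal generated by the
elements `c(j)·X_i − c(i)·X_j`. -/
def pIdeal (k : Type) [Field k] (ι : Type) (c : ι → k) : Ideal (MvPolynomial ι k) :=
  Ideal.span {f | ∃ i j : ι, f = C (c j) * X i - C (c i) * X j}

namespace Stmt7Aux

variable {k : Type} [Field k] {ι : Type}

/-- The substitution `X i ↦ v i · T` into `Polynomial S`. -/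
def phi (S : Type) [CommSemiring S] [Algebra k S] (v : ι → S) :
    MvPolynomial ι k →ₐ[k] Polynomial S :=
  aeval (fun i => Polynomial.C (v i) * Polynomial.X)

lemma coeff_phi (S : Type) [CommSemiring S] [Algebra k S] (v : ι → S)
    (f : MvPolynomial ι k) (n : ℕ) :
    (phi S v f).coeff n = aeval v (homogeneousComponent n f) := by
  induction f using MvPolynomial.induction_on' with
  | add p q hp hq => rw [map_add, Polynomial.coeff_add, hp, hq, map_add, map_add]
  | monomial s a =>
    have hprod : (s.prod fun i m => (Polynomial.C (v i) * Polynomial.X) ^ m)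
        = Polynomial.C (s.prod fun i m => v i ^ m) * Polynomial.X ^ s.degree := by
      rw [Finsupp.prod]
      simp_rw [mul_pow, ← Polynomial.C_pow]
      rw [Finset.prod_mul_distrib, ← map_prod, Finset.prod_pow_eq_pow_sum]
      rw [Finsupp.degree, Finsupp.prod]
      rfl
    rw [phi, aeval_monomial, hprod]
    rw [homogeneousComponent_of_mem (by
      rw [mem_homogeneousSubmodule]
      exact isHomogeneous_monomial a rfl)]
    rw [Polynomial.algebraMap_apply, ← mul_assoc, ← map_mul, Polynomial.coeff_C_mul,
      Polynomial.coeff_X_pow]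
    split_ifs with h
    · subst h; simp [aeval_monomial]
    · simp

lemma phi_homog {S : Type} [CommSemiring S] [Algebra k S] (v : ι → S)
    {f : MvPolynomial ι k} {n : ℕ} (hf : f ∈ homogeneousSubmodule ι k n) :
    phi S v f = Polynomial.C (aeval v f) * Polynomial.X ^ n := by
  ext m
  rw [coeff_phi, homogeneousComponent_of_mem hf, Polynomial.coeff_C_mul,
    Polynomial.coeff_X_pow]
  split_ifs with h <;> simp

lemma phi_eq_zero_iff (S : Type) [CommSemiring S] [Algebra k S] (v : ι → S)
    (f : MvPolynomial ι k) :
    phi S v f = 0 ↔ ∀ n, aeval v (homogeneousComponent n f) = 0 := by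
  rw [Polynomial.ext_iff]
  exact ⟨fun h n => (coeff_phi S v f n).symm.trans (h n),
    fun h n => (coeff_phi S v f n).trans ((h n).trans (Polynomial.coeff_zero n).symm)⟩


variable {c : ι → k}

lemma gen_mem (a b : ι) : C (c b) * X a - C (c a) * X b ∈ pIdeal k ι c :=
  Ideal.subset_span ⟨a, b, rfl⟩

lemma phi_gen_eq_zero (a b : ι) :
    phi k c (C (c b) * X a - C (c a) * X b) = 0 := by
  simp only [phi, map_sub, map_mul, aeval_C, aeval_X, Polynomial.algebraMap_apply,
    Algebra.algebraMap_self, RingHom.id_apply]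
  ring

lemma pIdeal_le_ker : pIdeal k ι c ≤ RingHom.ker (phi k c) := by
  rw [pIdeal, Ideal.span_le]
  rintro f ⟨a, b, rfl⟩
  exact phi_gen_eq_zero a b

lemma phi_component_eq_zero {f : MvPolynomial ι k} (h : phi k c f = 0) (n : ℕ) :
    phi k c (homogeneousComponent n f) = 0 := by
  rw [phi_eq_zero_iff]
  intro m
  rw [homogeneousComponent_of_mem (homogeneousComponent_mem n f)]
  split_ifs with hm
  · subst hm
    have := coeff_phi k c f m
    rw [h, Polynomial.coeff_zero] at this
    exact this.symm
  · simp

lemma aeval_smul_eq (r : k) (g : MvPolynomial ι k) :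
    aeval (r • c) g = Polynomial.eval r (phi k c g) := by
  have hext : (Polynomial.aeval r).comp (phi k c) = (aeval (r • c) :
      MvPolynomial ι k →ₐ[k] k) := by
    apply MvPolynomial.algHom_ext
    intro i
    simp only [AlgHom.comp_apply, phi, aeval_X, map_mul, Polynomial.aeval_C,
      Polynomial.aeval_X, Pi.smul_apply, smul_eq_mul, Algebra.algebraMap_self,
      RingHom.id_apply]
    ring
  have := congrArg (fun F : MvPolynomial ι k →ₐ[k] k => F g) hext
  rw [← Polynomial.coe_aeval_eq_eval]
  exact this.symm

lemma phi_smul_eq_zero {f : MvPolynomial ι k} (h : phi k c f = 0) (r : k) :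
    phi k (r • c) f = 0 := by
  rw [phi_eq_zero_iff]
  intro n
  rw [aeval_smul_eq, phi_component_eq_zero h n, Polynomial.eval_zero]

lemma ker_le_pIdeal {i₀ : ι} (h0 : c i₀ ≠ 0) :
    RingHom.ker (phi k c) ≤ pIdeal k ι c := by
  intro f hf
  rw [RingHom.mem_ker] at hf
  set θ : MvPolynomial ι k →ₐ[k] MvPolynomial ι k :=
    aeval (fun j => C (c j * (c i₀)⁻¹) * X i₀) with hθ
  have step1 : ∀ g : MvPolynomial ι k, g - θ g ∈ pIdeal k ι c := by
    intro g
    induction g using MvPolynomial.induction_on with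
    | C a =>
        rw [hθ]
        simp only [aeval_C, algebraMap_eq, sub_self]
        exact zero_mem _
    | add p q hp hq =>
        have : p + q - θ (p + q) = (p - θ p) + (q - θ q) := by rw [map_add]; ring
        rw [this]; exact add_mem hp hq
    | mul_X p i hp =>
        have key : (X i : MvPolynomial ι k) - C (c i * (c i₀)⁻¹) * X i₀ =
            C ((c i₀)⁻¹) * (C (c i₀) * X i - C (c i) * X i₀) := by
          rw [mul_sub, ← mul_assoc, ← mul_assoc, ← C_mul, ← C_mul,
            inv_mul_cancel₀ h0, C_1, one_mul, mul_comm ((c i₀)⁻¹) (c i)]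
        have hXi : (X i : MvPolynomial ι k) - θ (X i) ∈ pIdeal k ι c := by
          rw [hθ]
          simp only [aeval_X]
          rw [key]
          exact Ideal.mul_mem_left _ _ (gen_mem i i₀)
        have : p * X i - θ (p * X i) = (p - θ p) * X i + θ p * (X i - θ (X i)) := by
          rw [map_mul]; ring
        rw [this]
        exact add_mem (Ideal.mul_mem_right _ _ hp) (Ideal.mul_mem_left _ _ hXi)
  have step2 : θ f = 0 := by
    have hker : phi k ((c i₀)⁻¹ • c) f = 0 := phi_smul_eq_zero hf _
    have hcomp : θ = (Polynomial.aeval (X i₀ : MvPolynomial ι k)).comp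
        (phi k ((c i₀)⁻¹ • c)) := by
      apply MvPolynomial.algHom_ext
      intro i
      rw [hθ, AlgHom.comp_apply]
      simp only [aeval_X, phi, map_mul, Polynomial.aeval_X, Polynomial.aeval_C,
        Pi.smul_apply, smul_eq_mul, algebraMap_eq]
      ring
    rw [hcomp, AlgHom.comp_apply, hker, map_zero]
  have := step1 f
  rwa [step2, sub_zero] at this

lemma pIdeal_eq_ker (hc : c ≠ 0) : pIdeal k ι c = RingHom.ker (phi k c) := by
  obtain ⟨i₀, h0⟩ := Function.ne_iff.mp hc
  exact le_antisymm pIdeal_le_ker (ker_le_pIdeal h0)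


lemma pIdeal_homogeneous (c : ι → k) :
    Ideal.IsHomogeneous (homogeneousSubmodule ι k) (pIdeal k ι c) := by
  apply Ideal.homogeneous_span
  rintro f ⟨a, b, rfl⟩
  refine ⟨1, sub_mem ?_ ?_⟩ <;>
    · rw [mem_homogeneousSubmodule]
      exact isHomogeneous_C_mul_X _ _

lemma decompose_coe (f : MvPolynomial ι k) (n : ℕ) :
    (DirectSum.decompose (homogeneousSubmodule ι k) f n : MvPolynomial ι k) =
      homogeneousComponent n f :=
  MvPolynomial.decomposition.decompose'_apply f n

lemma component_mem_of_mem {I : Ideal (MvPolynomial ι k)}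
    (hI : Ideal.IsHomogeneous (homogeneousSubmodule ι k) I)
    {f : MvPolynomial ι k} (hf : f ∈ I) (n : ℕ) :
    homogeneousComponent n f ∈ I := by
  rw [← decompose_coe]
  exact hI n hf

lemma pIdeal_prime (hc : c ≠ 0) : (pIdeal k ι c).IsPrime := by
  rw [pIdeal_eq_ker hc]
  exact RingHom.ker_isPrime _

lemma X_mem_irrelevant (i : ι) :
    (X i : MvPolynomial ι k) ∈ HomogeneousIdeal.irrelevant (homogeneousSubmodule ι k) := by
  rw [HomogeneousIdeal.mem_irrelevant_iff, GradedRing.proj_apply, decompose_coe,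
    homogeneousComponent_of_mem (by
      rw [mem_homogeneousSubmodule]; exact isHomogeneous_X _ _)]
  simp

lemma X_not_mem_pIdeal {i₀ : ι} (hc : c ≠ 0) (h0 : c i₀ ≠ 0) :
    (X i₀ : MvPolynomial ι k) ∉ pIdeal k ι c := by
  rw [pIdeal_eq_ker hc, RingHom.mem_ker]
  intro h
  have h1 : (phi k c (X i₀ : MvPolynomial ι k)).coeff 1 = 0 := by rw [h]; simp
  rw [phi] at h1
  simp only [aeval_X] at h1
  rw [Polynomial.coeff_C_mul, Polynomial.coeff_X_one, mul_one] at h1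
  exact h0 h1

/-- The point of `Proj` corresponding to `pIdeal c`. -/
def pt (c : ι → k) (hc : c ≠ 0) : ProjectiveSpectrum (homogeneousSubmodule ι k) := by
  obtain h0 := Function.ne_iff.mp hc
  exact
    { asHomogeneousIdeal := ⟨pIdeal k ι c, pIdeal_homogeneous c⟩
      isPrime := pIdeal_prime hc
      not_irrelevant_le := fun hle =>
        X_not_mem_pIdeal hc h0.choose_spec (hle (X_mem_irrelevant h0.choose)) }

@[simp] lemma pt_toIdeal (c : ι → k) (hc : c ≠ 0) :
    (pt c hc).asHomogeneousIdeal.toIdeal = pIdeal k ι c := rfl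

lemma exists_relevant (y : ProjectiveSpectrum (homogeneousSubmodule ι k)) :
    ∃ (e : ℕ) (g : MvPolynomial ι k), e ≠ 0 ∧ g ∈ homogeneousSubmodule ι k e ∧
      g ∉ y.asHomogeneousIdeal.toIdeal := by
  have := y.not_irrelevant_le
  rw [SetLike.not_le_iff_exists] at this
  obtain ⟨z, hz_irr, hz⟩ := this
  have hz' : z ∉ y.asHomogeneousIdeal.toIdeal := hz
  have hnot : ¬ ∀ n, homogeneousComponent n z ∈ y.asHomogeneousIdeal.toIdeal := by
    intro hall
    apply hz'
    rw [← sum_homogeneousComponent z]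
    exact Ideal.sum_mem _ fun i _ => hall i
  push_neg at hnot
  obtain ⟨e, he⟩ := hnot
  refine ⟨e, homogeneousComponent e z, ?_, homogeneousComponent_mem e z, he⟩
  rintro rfl
  apply he
  have h0 : homogeneousComponent 0 z = 0 := by
    rw [← decompose_coe]
    rw [HomogeneousIdeal.mem_irrelevant_iff, GradedRing.proj_apply] at hz_irr
    exact hz_irr
  rw [h0]
  exact zero_mem _

lemma mem_pIdeal_of_homog (hc : c ≠ 0) {f : MvPolynomial ι k} {n : ℕ}
    (hf : f ∈ homogeneousSubmodule ι k n) (h : aeval c f = 0) :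
    f ∈ pIdeal k ι c := by
  rw [pIdeal_eq_ker hc, RingHom.mem_ker, phi_homog c hf, h, map_zero, zero_mul]

lemma aeval_eq_zero_of_mem (hc : c ≠ 0)
    (y : ProjectiveSpectrum (homogeneousSubmodule ι k))
    (hle : pIdeal k ι c ≤ y.asHomogeneousIdeal.toIdeal)
    {n : ℕ} {h : MvPolynomial ι k} (hhm : h ∈ homogeneousSubmodule ι k n)
    (hmem : h ∈ y.asHomogeneousIdeal.toIdeal) : aeval c h = 0 := by
  obtain ⟨e, g, he, hgm, hg⟩ := exists_relevant y
  by_cases hn : n = 0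
  · subst hn
    have hC : h = C (coeff 0 h) := by
      have h1 := homogeneousComponent_of_mem hhm (m := 0)
      rw [if_pos rfl] at h1
      conv_lhs => rw [← h1]
      rw [homogeneousComponent_zero]
    by_cases ha : coeff 0 h = 0
    · rw [hC, ha, map_zero, map_zero]
    · exfalso
      exact y.isPrime.ne_top (Ideal.eq_top_of_isUnit_mem _ hmem
        (hC ▸ (isUnit_iff_ne_zero.mpr ha).map (C : k →+* MvPolynomial ι k)))
  · by_contra hv
    set w := C ((aeval c h) ^ e) * g ^ n - C ((aeval c g) ^ n) * h ^ e with hw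
    have hwm : w ∈ homogeneousSubmodule ι k (e * n) := by
      rw [mem_homogeneousSubmodule]
      apply MvPolynomial.IsHomogeneous.sub
      · exact (((mem_homogeneousSubmodule _ _).mp hgm).pow n).C_mul _
      · have h2 := (((mem_homogeneousSubmodule _ _).mp hhm).pow e).C_mul
          ((aeval c g) ^ n)
        rwa [mul_comm n e] at h2
    have hwv : aeval c w = 0 := by
      rw [hw]
      simp only [map_sub, map_mul, map_pow, aeval_C, Algebra.algebraMap_self, RingHom.id_apply]
      ring
    have hwy : w ∈ y.asHomogeneousIdeal.toIdeal := hle (mem_pIdeal_of_homog hc hwm hwv)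
    have hh : C ((aeval c g) ^ n) * h ^ e ∈ y.asHomogeneousIdeal.toIdeal :=
      Ideal.mul_mem_left _ _ (Ideal.pow_mem_of_mem _ hmem e (Nat.pos_of_ne_zero he))
    have hgy : C ((aeval c h) ^ e) * g ^ n ∈ y.asHomogeneousIdeal.toIdeal := by
      have h3 : w + C ((aeval c g) ^ n) * h ^ e = C ((aeval c h) ^ e) * g ^ n := by
        rw [hw]; ring
      rw [← h3]
      exact add_mem hwy hh
    have hunit : IsUnit (C ((aeval c h) ^ e) : MvPolynomial ι k) :=
      (isUnit_iff_ne_zero.mpr (pow_ne_zero e hv)).map (C : k →+* MvPolynomial ι k)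
    have h4 : g ^ n ∈ y.asHomogeneousIdeal.toIdeal :=
      (Ideal.unit_mul_mem_iff_mem _ hunit).mp hgy
    exact hg (y.isPrime.mem_of_pow_mem n h4)

lemma pIdeal_maximal (hc : c ≠ 0) (y : ProjectiveSpectrum (homogeneousSubmodule ι k))
    (hle : pIdeal k ι c ≤ y.asHomogeneousIdeal.toIdeal) :
    y.asHomogeneousIdeal.toIdeal ≤ pIdeal k ι c := by
  intro f hf
  rw [pIdeal_eq_ker hc, RingHom.mem_ker, phi_eq_zero_iff]
  intro n
  exact aeval_eq_zero_of_mem hc y hle (homogeneousComponent_mem n f)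
    (component_mem_of_mem y.asHomogeneousIdeal.is_homogeneous' hf n)

lemma isClosed_pt (hc : c ≠ 0) :
    IsClosed ({pt c hc} : Set (ProjectiveSpectrum (homogeneousSubmodule ι k))) := by
  apply isClosed_of_closure_subset
  intro y hy
  have hle : pt c hc ≤ y := (ProjectiveSpectrum.le_iff_mem_closure _ _ _).mpr hy
  have hle' : pIdeal k ι c ≤ y.asHomogeneousIdeal.toIdeal := hle
  have heq : y = pt c hc := by
    ext1
    apply HomogeneousIdeal.toIdeal_injective
    exact le_antisymm (pIdeal_maximal hc y hle') hle'
  rw [heq]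
  rfl


lemma rank_quot_le [Countable ι] (𝔪 : Ideal (MvPolynomial ι k)) :
    Module.rank k (MvPolynomial ι k ⧸ 𝔪) ≤ Cardinal.aleph0 := by
  have h1 : Module.rank k (MvPolynomial ι k ⧸ 𝔪) ≤ Module.rank k (MvPolynomial ι k) :=
    LinearMap.rank_le_of_surjective (Ideal.Quotient.mkₐ k 𝔪).toLinearMap
      Ideal.Quotient.mk_surjective
  refine h1.trans ?_
  rw [MvPolynomial.rank_eq]
  exact Cardinal.mk_le_aleph0

lemma algebraMap_surjective_of_rank [IsAlgClosed k]
    (hcard : Cardinal.aleph0 < Cardinal.mk k)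
    {K : Type} [Field K] [Algebra k K] (hrank : Module.rank k K ≤ Cardinal.aleph0) :
    Function.Surjective (algebraMap k K) := by
  haveI : Algebra.IsAlgebraic k K := ⟨fun x => by
    by_contra hx
    exact absurd ((Transcendental.linearIndependent_sub_inv hx).cardinal_le_rank.trans hrank)
      (not_le.mpr hcard)⟩
  exact (IsAlgClosed.algebraMap_bijective_of_isIntegral (k := k)).2

lemma exists_c [Countable ι] [IsAlgClosed k]
    (hcard : Cardinal.aleph0 < Cardinal.mk k)
    (x : ProjectiveSpectrum (homogeneousSubmodule ι k)) :
    ∃ c : ι → k, c ≠ 0 ∧ x.asHomogeneousIdeal.toIdeal ≤ pIdeal k ι c := by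
  obtain ⟨e, g, he, hgm, hg⟩ := exists_relevant x
  set 𝔭 := x.asHomogeneousIdeal.toIdeal with h𝔭
  have hproper : 𝔭 ⊔ Ideal.span {g - 1} ≠ ⊤ := by
    intro htop
    have h1 : (1 : MvPolynomial ι k) ∈ 𝔭 ⊔ Ideal.span {g - 1} := htop ▸ Submodule.mem_top
    rw [Submodule.mem_sup] at h1
    obtain ⟨p, hp, q, hq, hpq⟩ := h1
    rw [Ideal.mem_span_singleton'] at hq
    obtain ⟨a, ha⟩ := hq
    set v : ι → (MvPolynomial ι k ⧸ 𝔭) := fun i => Ideal.Quotient.mkₐ k 𝔭 (X i) with hv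
    have hmk : ∀ f : MvPolynomial ι k, aeval v f = Ideal.Quotient.mkₐ k 𝔭 f := by
      have hext : (aeval v : MvPolynomial ι k →ₐ[k] (MvPolynomial ι k ⧸ 𝔭)) =
          Ideal.Quotient.mkₐ k 𝔭 := by
        apply MvPolynomial.algHom_ext
        intro i
        rw [aeval_X]
      intro f
      rw [hext]
    have hρp : phi (MvPolynomial ι k ⧸ 𝔭) v p = 0 := by
      rw [phi_eq_zero_iff]
      intro n
      rw [hmk, Ideal.Quotient.mkₐ_eq_mk, Ideal.Quotient.eq_zero_iff_mem]
      exact component_mem_of_mem x.asHomogeneousIdeal.is_homogeneous' hp n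
    have hρg : phi (MvPolynomial ι k ⧸ 𝔭) v g =
        Polynomial.C (Ideal.Quotient.mk 𝔭 g) * Polynomial.X ^ e := by
      rw [phi_homog v hgm, hmk, Ideal.Quotient.mkₐ_eq_mk]
    have hone : (1 : Polynomial (MvPolynomial ι k ⧸ 𝔭)) =
        phi (MvPolynomial ι k ⧸ 𝔭) v a *
          (Polynomial.C (Ideal.Quotient.mk 𝔭 g) * Polynomial.X ^ e - 1) := by
      have h2 := congrArg (phi (MvPolynomial ι k ⧸ 𝔭) v) hpq
      rw [map_add, map_one, ← ha, map_mul, map_sub, map_one, hρp, hρg, zero_add] at h2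
      exact h2.symm
    have hu : IsUnit (Polynomial.C (Ideal.Quotient.mk 𝔭 g) * Polynomial.X ^ e - 1 :
        Polynomial (MvPolynomial ι k ⧸ 𝔭)) :=
      IsUnit.of_mul_eq_one _ (by rw [mul_comm]; exact hone.symm)
    rw [Polynomial.isUnit_iff] at hu
    obtain ⟨r, _, hCr⟩ := hu
    have hcoeff := congrArg (fun P : Polynomial (MvPolynomial ι k ⧸ 𝔭) => P.coeff e) hCr
    simp only [Polynomial.coeff_C, Polynomial.coeff_sub, Polynomial.coeff_C_mul,
      Polynomial.coeff_X_pow, Polynomial.coeff_one, if_neg he, if_pos rfl, if_true,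
      mul_one, sub_zero] at hcoeff
    exact hg (Ideal.Quotient.eq_zero_iff_mem.mp hcoeff.symm)
  obtain ⟨𝔪, hmax, hJm⟩ := Ideal.exists_le_maximal _ hproper
  haveI := hmax
  letI : Field (MvPolynomial ι k ⧸ 𝔪) := Ideal.Quotient.field 𝔪
  have hsurj : Function.Surjective (algebraMap k (MvPolynomial ι k ⧸ 𝔪)) :=
    algebraMap_surjective_of_rank hcard (rank_quot_le 𝔪)
  have hinj : Function.Injective (algebraMap k (MvPolynomial ι k ⧸ 𝔪)) :=
    (algebraMap k (MvPolynomial ι k ⧸ 𝔪)).injective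
  set E := AlgEquiv.ofBijective (Algebra.ofId k (MvPolynomial ι k ⧸ 𝔪)) ⟨hinj, hsurj⟩
    with hE
  set c : ι → k := fun i => E.symm (Ideal.Quotient.mk 𝔪 (X i)) with hcdef
  have hψ : ∀ f : MvPolynomial ι k,
      aeval c f = E.symm (Ideal.Quotient.mk 𝔪 f) := by
    have hext : (aeval c : MvPolynomial ι k →ₐ[k] k) =
        (E.symm.toAlgHom).comp (Ideal.Quotient.mkₐ k 𝔪) := by
      apply MvPolynomial.algHom_ext
      intro i
      rw [aeval_X]
      rfl
    intro f
    rw [hext]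
    rfl
  have hgm𝔪 : g - 1 ∈ 𝔪 := hJm (Ideal.mem_sup_right (Ideal.subset_span rfl))
  have hc : c ≠ 0 := by
    intro h0
    have hg1 : aeval c g = 1 := by
      have hq1 : Ideal.Quotient.mk 𝔪 g = 1 := by
        have h2 := Ideal.Quotient.eq_zero_iff_mem.mpr hgm𝔪
        rwa [map_sub, map_one, sub_eq_zero] at h2
      rw [hψ, hq1, map_one]
    have hg0 : aeval c g = 0 := by
      rw [h0, MvPolynomial.aeval_zero]
      have hc0 : coeff 0 g = 0 := by
        have h1 := homogeneousComponent_of_mem hgm (m := 0)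
        rw [if_neg (Ne.symm he), homogeneousComponent_zero] at h1
        exact (MvPolynomial.C_eq_zero).mp h1
      rw [show constantCoeff g = coeff 0 g from congrFun constantCoeff_eq g, hc0, map_zero]
    rw [hg1] at hg0
    exact one_ne_zero hg0
  refine ⟨c, hc, ?_⟩
  intro f hf
  rw [pIdeal_eq_ker hc, RingHom.mem_ker, phi_eq_zero_iff]
  intro n
  rw [hψ]
  have hmem : homogeneousComponent n f ∈ 𝔪 :=
    hJm (Ideal.mem_sup_left
      (component_mem_of_mem x.asHomogeneousIdeal.is_homogeneous' hf n))
  rw [Ideal.Quotient.eq_zero_iff_mem.mpr hmem, map_zero]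


lemma gen_eval {c' : ι → k} (hc' : c' ≠ 0) (a b : ι) (u v : k)
    (hmem : C u * X a - C v * X b ∈ pIdeal k ι c') :
    u * c' a - v * c' b = 0 := by
  rw [pIdeal_eq_ker hc', RingHom.mem_ker] at hmem
  have hval : phi k c' (C u * X a - C v * X b) =
      Polynomial.C (u * c' a - v * c' b) * Polynomial.X := by
    rw [phi]
    rw [map_sub, map_mul, map_mul, aeval_C, aeval_C, aeval_X, aeval_X,
      Polynomial.algebraMap_apply, Polynomial.algebraMap_apply]
    simp only [Algebra.algebraMap_self, RingHom.id_apply]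
    rw [map_sub, map_mul, map_mul]
    ring
  rw [hval] at hmem
  have h1 := congrArg (fun P : Polynomial k => P.coeff 1) hmem
  simpa using h1

lemma pIdeal_smul (hc : c ≠ 0) {l : k} (hl : l ≠ 0) :
    pIdeal k ι c = pIdeal k ι (l • c) := by
  have hlc : l • c ≠ 0 := by
    intro h
    apply hc
    funext j
    have h2 := congrFun h j
    simp only [Pi.smul_apply, smul_eq_mul, Pi.zero_apply, mul_eq_zero] at h2
    exact h2.resolve_left hl
  rw [pIdeal_eq_ker hc, pIdeal_eq_ker hlc]
  ext f
  simp only [RingHom.mem_ker]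
  constructor
  · intro h
    exact phi_smul_eq_zero h l
  · intro h
    have h2 := phi_smul_eq_zero h l⁻¹
    rwa [smul_smul, inv_mul_cancel₀ hl, one_smul] at h2

end Stmt7Aux

open Stmt7Aux in
/-- let `k` be algebraically closed with `|k| > ℵ₀` and `ι` countably
infinite.  For each nonzero `c : ι → k`, the ideal `𝔭_c` is a homogeneous prime not
containing the irrelevant ideal, giving a closed point of `Proj (k[X_i : i ∈ ι])`;
`𝔭_c = 𝔭_{c'}` iff `c' = λ • c` for some `λ ∈ kˣ`; and every closed point of `Proj`
arises this way.  Thus the closed points of `Proj` correspond to nonzero functions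
`ι → k` modulo scalars. -/
theorem stmt7 (k : Type) [Field k] [IsAlgClosed k]
    (hcard : Cardinal.aleph0 < Cardinal.mk k)
    (ι : Type) [Countable ι] [Infinite ι] :
    (∀ c : ι → k, c ≠ 0 →
      ∃ x : ProjectiveSpectrum (homogeneousSubmodule ι k),
        x.asHomogeneousIdeal.toIdeal = pIdeal k ι c ∧ IsClosed ({x} :
          Set (ProjectiveSpectrum (homogeneousSubmodule ι k)))) ∧
    (∀ c c' : ι → k, c ≠ 0 → c' ≠ 0 →
      (pIdeal k ι c = pIdeal k ι c' ↔ ∃ l : k, l ≠ 0 ∧ c' = l • c)) ∧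
    (∀ x : ProjectiveSpectrum (homogeneousSubmodule ι k),
      IsClosed ({x} : Set (ProjectiveSpectrum (homogeneousSubmodule ι k))) →
      ∃ c : ι → k, c ≠ 0 ∧ x.asHomogeneousIdeal.toIdeal = pIdeal k ι c) := by
  refine ⟨fun c hc => ⟨pt c hc, pt_toIdeal c hc, isClosed_pt hc⟩, ?_, ?_⟩
  · intro c c' hc hc'
    constructor
    · intro hm
      obtain ⟨i₀, hi₀⟩ := Function.ne_iff.mp hc
      obtain ⟨j₀, hj₀⟩ := Function.ne_iff.mp hc'
      have hA : c' j₀ * c i₀ - c' i₀ * c j₀ = 0 := by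
        apply gen_eval hc
        rw [hm]
        exact gen_mem i₀ j₀
      have hi₀' : c' i₀ ≠ 0 := by
        intro h
        rw [h, zero_mul, sub_zero] at hA
        exact (mul_ne_zero hj₀ hi₀) hA
      refine ⟨c' i₀ * (c i₀)⁻¹, mul_ne_zero hi₀' (inv_ne_zero hi₀), ?_⟩
      funext j
      have hB : c i₀ * c' j - c j * c' i₀ = 0 := by
        apply gen_eval hc'
        rw [← hm]
        exact gen_mem j i₀
      have hB' : c i₀ * c' j = c j * c' i₀ := sub_eq_zero.mp hB
      replace hi₀ : c i₀ ≠ 0 := hi₀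
      rw [Pi.smul_apply, smul_eq_mul]
      have h5 : c' j = (c i₀)⁻¹ * (c j * c' i₀) := by
        rw [← hB', inv_mul_cancel_left₀ hi₀]
      rw [h5]
      ring
    · rintro ⟨l, hl, rfl⟩
      exact pIdeal_smul hc hl
  · intro x hcl
    obtain ⟨c, hc, hle⟩ := exists_c hcard x
    refine ⟨c, hc, ?_⟩
    have hxy : x ≤ pt c hc := hle
    have hmem := (ProjectiveSpectrum.le_iff_mem_closure _ x (pt c hc)).mp hxy
    rw [hcl.closure_eq] at hmem
    have heq : pt c hc = x := Set.mem_singleton_iff.mp hmem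
    rw [← heq]
    rfl


end
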